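/- Let L be a Lie algebra over a field K of characteristic ≠ 2 generated by two extremal elements x and y. Then L is spanned by {x, y, ⁅x,y⁆}; in particular dim L ≤ 3. -/
import Mathlib


theorem two_generated_span {K L : Type*} [Field K] [LieRing L] [LieAlgebra K L]
    (hchar : (2 : K) ≠ 0) (x y : L) (fx fy : L →ₗ[K] K)
    (hx : ∀ m : L, ⁅x, ⁅x, m⁆⁆ = fx m • x)
    (hy : ∀ m : L, ⁅y, ⁅y, m⁆⁆ = fy m • y)
    (hgen : LieSubalgebra.lieSpan K L {x, y} = ⊤) :
    Submodule.span K {x, y, ⁅x, y⁆} = ⊤ := by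
  set s : Set L := {x, y, ⁅x, y⁆} with hs
  set P : Submodule K L := Submodule.span K s with hP
  have hxm : x ∈ P := Submodule.subset_span (by simp [hs])
  have hym : y ∈ P := Submodule.subset_span (by simp [hs])
  have hxym : ⁅x, y⁆ ∈ P := Submodule.subset_span (by simp [hs])
  have hbase : ∀ a ∈ s, ∀ b ∈ s, ⁅a, b⁆ ∈ P := by
    intro a ha b hb
    simp only [hs, Set.mem_insert_iff, Set.mem_singleton_iff] at ha hb
    rcases ha with ha | ha | ha <;> rcases hb with hb | hb | hb <;> rw [ha, hb]
    · simp
    · exact hxym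
    · rw [hx y]; exact P.smul_mem _ hxm
    · rw [← lie_skew]; exact P.neg_mem hxym
    · simp
    · have : ⁅y, ⁅x, y⁆⁆ = -(fy x • y) := by
        rw [← lie_skew x y, lie_neg, hy x]
      rw [this]; exact P.neg_mem (P.smul_mem _ hym)
    · rw [← lie_skew]
      refine P.neg_mem ?_
      rw [hx y]; exact P.smul_mem _ hxm
    · rw [← lie_skew]
      have : ⁅y, ⁅x, y⁆⁆ = -(fy x • y) := by
        rw [← lie_skew x y, lie_neg, hy x]
      rw [this]; exact P.neg_mem (P.neg_mem (P.smul_mem _ hym))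
    · simp
  have hclosed : ∀ a ∈ P, ∀ b ∈ P, ⁅a, b⁆ ∈ P := by
    intro a ha b hb
    induction ha using Submodule.span_induction with
    | mem u hu =>
      induction hb using Submodule.span_induction with
      | mem v hv => exact hbase u hu v hv
      | zero => simp
      | add v w _ _ h1 h2 => rw [lie_add]; exact P.add_mem h1 h2
      | smul c v _ h1 => rw [lie_smul]; exact P.smul_mem _ h1
    | zero => simp
    | add u v _ _ h1 h2 => rw [add_lie]; exact P.add_mem h1 h2
    | smul c u _ h1 => rw [smul_lie]; exact P.smul_mem _ h1
  let S : LieSubalgebra K L := { P with lie_mem' := fun {a b} ha hb => hclosed a ha b hb }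
  have hle : LieSubalgebra.lieSpan K L {x, y} ≤ S := by
    rw [LieSubalgebra.lieSpan_le]
    intro z hz
    rcases hz with rfl | hz
    · exact hxm
    · rw [Set.mem_singleton_iff] at hz; subst hz; exact hym
  rw [eq_top_iff]
  intro z _
  have : z ∈ S := hle (hgen ▸ LieSubalgebra.mem_top z)
  exact this
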